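/- For every polynomial p ∈ R the element φ(p) − 1 ⊗ p − Σ_{ℓ=1}^{n} e_ℓ ⊗ D_ℓ(p) lies in the image of I² ⊗ R in R ⊗_ℤ R, where I = (e_1, …, e_n) is the augmentation ideal of R; moreover the elements D_ℓ(p) are uniquely determined by this property (i.e., if q_1, …, q_n ∈ R satisfy φ(p) − 1 ⊗ p − Σ_ℓ e_ℓ ⊗ q_ℓ ∈ I² ⊗ R, then q_ℓ = D_ℓ(p) for all ℓ). -/

import Mathlib

open MvPolynomial Finset TensorProduct

noncomputable def ee (K : Type) [CommRing K] (n : ℕ) : ℕ → MvPolynomial (Fin n) K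
  | 0 => 1
  | (m + 1) => if h : m + 1 ≤ n then MvPolynomial.X ⟨m, by omega⟩ else 0

noncomputable def DD (K : Type) [CommRing K] (n : ℕ) (i : Fin n) :
    MvPolynomial (Fin n) K →ₗ[K] MvPolynomial (Fin n) K :=
  ∑ j : Fin n, if i ≤ j then
    (LinearMap.mulLeft K (ee K n (j.val - i.val))).comp (MvPolynomial.pderiv j).toLinearMap
  else 0

/-- The coproduct `φ(e_k) = ∑_{i=0}^{k} e_i ⊗ e_{k-i}`. -/
noncomputable def phi (n : ℕ) :
    MvPolynomial (Fin n) ℤ →ₐ[ℤ] (MvPolynomial (Fin n) ℤ ⊗[ℤ] MvPolynomial (Fin n) ℤ) :=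
  MvPolynomial.aeval (fun j : Fin n =>
    ∑ i ∈ Finset.range (j.val + 2), (ee ℤ n i) ⊗ₜ[ℤ] (ee ℤ n (j.val + 1 - i)))

/-- The augmentation ideal `I = (e_1, …, e_n)`. -/
noncomputable def augI (n : ℕ) : Ideal (MvPolynomial (Fin n) ℤ) :=
  Ideal.span (Set.range (MvPolynomial.X : Fin n → MvPolynomial (Fin n) ℤ))

/-- The image of `I² ⊗ R` in `R ⊗ R`. -/
noncomputable def I2T (n : ℕ) :
    Submodule ℤ (MvPolynomial (Fin n) ℤ ⊗[ℤ] MvPolynomial (Fin n) ℤ) :=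
  LinearMap.range (TensorProduct.map
    (((augI n ^ 2 : Ideal (MvPolynomial (Fin n) ℤ)).restrictScalars ℤ).subtype)
    (LinearMap.id))

section helpers

variable {n : ℕ}

lemma DD_apply (i : Fin n) (p : MvPolynomial (Fin n) ℤ) :
    DD ℤ n i p = ∑ j : Fin n, if i ≤ j then
      ee ℤ n (j.val - i.val) * pderiv j p else 0 := by
  rw [DD, LinearMap.sum_apply]
  refine Finset.sum_congr rfl fun j _ => ?_
  split_ifs <;> simp

lemma DD_mul (i : Fin n) (p q : MvPolynomial (Fin n) ℤ) :
    DD ℤ n i (p * q) = p * DD ℤ n i q + q * DD ℤ n i p := by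
  simp only [DD_apply, pderiv_mul, Finset.mul_sum, ← Finset.sum_add_distrib]
  refine Finset.sum_congr rfl fun j _ => ?_
  split_ifs <;> ring

lemma DD_X (i j : Fin n) :
    DD ℤ n i (X j) = if i ≤ j then ee ℤ n (j.val - i.val) else 0 := by
  classical
  rw [DD_apply, Finset.sum_eq_single j]
  · split_ifs <;> simp
  · intro k _ hk
    rw [pderiv_X_of_ne (Ne.symm hk)]
    split_ifs <;> simp
  · simp

lemma tmul_mem_I2T {a b : MvPolynomial (Fin n) ℤ} (ha : a ∈ augI n ^ 2) :
    a ⊗ₜ[ℤ] b ∈ I2T n :=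
  ⟨(⟨a, ha⟩ : (augI n ^ 2 : Ideal _)) ⊗ₜ[ℤ] b, rfl⟩

lemma I2T_mul_mem (x : MvPolynomial (Fin n) ℤ ⊗[ℤ] MvPolynomial (Fin n) ℤ)
    {y} (hy : y ∈ I2T n) : x * y ∈ I2T n := by
  replace hy := (LinearMap.mem_range (f := TensorProduct.map
    (((augI n ^ 2 : Ideal (MvPolynomial (Fin n) ℤ)).restrictScalars ℤ).subtype)
    (LinearMap.id))).1 hy
  obtain ⟨z, rfl⟩ := hy
  induction z using TensorProduct.induction_on with
  | zero => simpa using (I2T n).zero_mem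
  | add z w hz hw => rw [map_add, mul_add]; exact (I2T n).add_mem hz hw
  | tmul a b =>
    induction x using TensorProduct.induction_on with
    | zero => simpa using (I2T n).zero_mem
    | add u v hu hv => rw [add_mul]; exact (I2T n).add_mem hu hv
    | tmul c d =>
      simp only [TensorProduct.map_tmul, Algebra.TensorProduct.tmul_mul_tmul]
      exact tmul_mem_I2T (Ideal.mul_mem_left _ c a.2)

lemma constantCoeff_augI {a : MvPolynomial (Fin n) ℤ} (ha : a ∈ augI n) :
    constantCoeff a = 0 := by
  have h : augI n ≤ RingHom.ker (constantCoeff (R := ℤ) (σ := Fin n)) := by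
    rw [augI, Ideal.span_le]
    rintro _ ⟨i, rfl⟩
    simp [RingHom.mem_ker]
  exact h ha

lemma coeff_single_I2 (i : Fin n) {a : MvPolynomial (Fin n) ℤ} (ha : a ∈ augI n ^ 2) :
    coeff (Finsupp.single i 1) a = 0 := by
  rw [pow_two] at ha
  refine Submodule.mul_induction_on ha ?_ ?_
  · intro x hx y hy
    rw [coeff_mul]
    rw [Finsupp.antidiagonal_single, Finset.sum_map]
    have h1 : Finset.HasAntidiagonal.antidiagonal (1 : ℕ) = {(0, 1), (1, 0)} := rfl
    rw [h1]
    simp only [Finset.sum_insert, Finset.sum_singleton, Function.Embedding.coe_prodMap,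
      Function.Embedding.coeFn_mk, Prod.map_apply, Finsupp.single_zero]
    have hx0 : coeff 0 x = 0 := constantCoeff_augI hx
    have hy0 : coeff 0 y = 0 := constantCoeff_augI hy
    simp [hx0, hy0]
  · intro x y hx hy
    rw [coeff_add, hx, hy, add_zero]

noncomputable def Lmap (n : ℕ) (i : Fin n) :
    (MvPolynomial (Fin n) ℤ ⊗[ℤ] MvPolynomial (Fin n) ℤ) →ₗ[ℤ] MvPolynomial (Fin n) ℤ :=
  (TensorProduct.lid ℤ _).toLinearMap ∘ₗ
    TensorProduct.map (MvPolynomial.lcoeff ℤ (Finsupp.single i 1)) LinearMap.id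

lemma Lmap_tmul (i : Fin n) (a b : MvPolynomial (Fin n) ℤ) :
    Lmap n i (a ⊗ₜ[ℤ] b) = coeff (Finsupp.single i 1) a • b := by
  show (TensorProduct.lid ℤ _) (TensorProduct.map (MvPolynomial.lcoeff ℤ (Finsupp.single i 1))
    LinearMap.id (a ⊗ₜ[ℤ] b)) = _
  rw [TensorProduct.map_tmul]
  simp

lemma Lmap_I2T (i : Fin n) {z} (hz : z ∈ I2T n) : Lmap n i z = 0 := by
  replace hz := (LinearMap.mem_range (f := TensorProduct.map
    (((augI n ^ 2 : Ideal (MvPolynomial (Fin n) ℤ)).restrictScalars ℤ).subtype)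
    (LinearMap.id))).1 hz
  obtain ⟨w, rfl⟩ := hz
  induction w using TensorProduct.induction_on with
  | zero => simp
  | add u v hu hv => rw [map_add, map_add, hu, hv, add_zero]
  | tmul a b =>
    simp only [TensorProduct.map_tmul, Submodule.coe_subtype, LinearMap.id_coe, id_eq, Lmap_tmul]
    rw [coeff_single_I2 i a.2, zero_smul]

lemma Lmap_sum (i : Fin n) (r : Fin n → MvPolynomial (Fin n) ℤ) :
    Lmap n i (∑ j : Fin n, X j ⊗ₜ[ℤ] r j) = r i := by
  classical
  rw [map_sum, Finset.sum_eq_single i]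
  · rw [Lmap_tmul, coeff_X, if_pos rfl, one_smul]
  · intro j _ hj
    rw [Lmap_tmul, coeff_X', if_neg, zero_smul]
    intro h
    exact hj ((Finsupp.single_left_inj one_ne_zero).1 h)
  · simp

lemma ee_succ {m : ℕ} (h : m < n) : ee ℤ n (m + 1) = X ⟨m, h⟩ := by
  rw [ee, dif_pos (by omega)]

lemma phi_X (j : Fin n) :
    phi n (X j) = 1 ⊗ₜ[ℤ] X j + ∑ i : Fin n, X i ⊗ₜ[ℤ] DD ℤ n i (X j) := by
  classical
  rw [phi, aeval_X]
  have hLHS : ∑ i ∈ Finset.range (j.val + 2), ee ℤ n i ⊗ₜ[ℤ] ee ℤ n (j.val + 1 - i)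
      = (∑ i ∈ Finset.range (j.val + 1), ee ℤ n (i + 1) ⊗ₜ[ℤ] ee ℤ n (j.val - i))
        + ee ℤ n 0 ⊗ₜ[ℤ] ee ℤ n (j.val + 1) := by
    rw [Finset.sum_range_succ']
    congr 1
    refine Finset.sum_congr rfl fun i _ => ?_
    have h : j.val + 1 - (i + 1) = j.val - i := by omega
    rw [h]
  rw [hLHS]
  have h0 : (ee ℤ n 0 : MvPolynomial (Fin n) ℤ) = 1 := rfl
  have hj1 : ee ℤ n (j.val + 1) = X j := by
    rw [ee_succ j.isLt]
  rw [h0, hj1, add_comm]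
  congr 1
  have hRHS : ∑ i : Fin n, X i ⊗ₜ[ℤ] DD ℤ n i (X j)
      = ∑ i ∈ Finset.range n, (if h : i ≤ j.val then
          (X (⟨i, lt_of_le_of_lt h j.isLt⟩ : Fin n) : MvPolynomial (Fin n) ℤ) ⊗ₜ[ℤ]
            ee ℤ n (j.val - i) else 0) := by
    rw [← Fin.sum_univ_eq_sum_range]
    refine Finset.sum_congr rfl fun i _ => ?_
    rw [DD_X]
    by_cases h : i ≤ j
    · rw [if_pos h, dif_pos (Fin.le_def.1 h)]
    · rw [if_neg h, dif_neg (fun hc => h (Fin.le_def.2 hc)), TensorProduct.tmul_zero]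
  rw [hRHS]
  rw [← Finset.sum_subset (Finset.range_subset_range.2 j.isLt)
    (fun i _ hi => by rw [dif_neg (by simp at hi ⊢; omega)])]
  refine Finset.sum_congr rfl fun i hi => ?_
  rw [Finset.mem_range] at hi
  have hjn : j.val < n := j.isLt
  rw [dif_pos (by omega), ee_succ (by omega : i < n)]

lemma DD_C (i : Fin n) (a : ℤ) : DD ℤ n i (C a) = 0 := by
  rw [DD_apply]
  refine Finset.sum_eq_zero fun j _ => ?_
  rw [pderiv_C]
  split_ifs <;> simp

lemma existence (n : ℕ) (p : MvPolynomial (Fin n) ℤ) :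
    (phi n p - 1 ⊗ₜ[ℤ] p - ∑ i : Fin n, (MvPolynomial.X i) ⊗ₜ[ℤ] (DD ℤ n i p)) ∈ I2T n := by
  induction p using MvPolynomial.induction_on with
  | C a =>
    have h1 : phi n (C a) = 1 ⊗ₜ[ℤ] (C a : MvPolynomial (Fin n) ℤ) := by
      rw [show phi n (C a) = algebraMap ℤ _ a from aeval_C _ _,
        Algebra.TensorProduct.algebraMap_apply,
        show (algebraMap ℤ (MvPolynomial (Fin n) ℤ) a) = a • 1 from
          Algebra.algebraMap_eq_smul_one a,
        smul_tmul, ← Algebra.algebraMap_eq_smul_one, ← MvPolynomial.algebraMap_eq]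
    have h2 : ∑ i : Fin n, (X i : MvPolynomial (Fin n) ℤ) ⊗ₜ[ℤ] DD ℤ n i (C a) = 0 := by
      refine Finset.sum_eq_zero fun i _ => ?_
      rw [DD_C, TensorProduct.tmul_zero]
    rw [h1, h2]
    simpa using (I2T n).zero_mem
  | add p q hp hq =>
    have h : phi n (p + q) - 1 ⊗ₜ[ℤ] (p + q) -
        ∑ i : Fin n, (X i : MvPolynomial (Fin n) ℤ) ⊗ₜ[ℤ] DD ℤ n i (p + q)
        = (phi n p - 1 ⊗ₜ[ℤ] p - ∑ i : Fin n, X i ⊗ₜ[ℤ] DD ℤ n i p)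
          + (phi n q - 1 ⊗ₜ[ℤ] q - ∑ i : Fin n, X i ⊗ₜ[ℤ] DD ℤ n i q) := by
      rw [map_add, TensorProduct.tmul_add]
      have : ∀ i : Fin n, (X i : MvPolynomial (Fin n) ℤ) ⊗ₜ[ℤ] DD ℤ n i (p + q)
          = X i ⊗ₜ[ℤ] DD ℤ n i p + X i ⊗ₜ[ℤ] DD ℤ n i q := fun i => by
        rw [map_add, TensorProduct.tmul_add]
      rw [Finset.sum_congr rfl fun i _ => this i, Finset.sum_add_distrib]
      abel
    rw [h]
    exact (I2T n).add_mem hp hq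
  | mul_X p j hp =>
    set Sp := ∑ i : Fin n, (X i : MvPolynomial (Fin n) ℤ) ⊗ₜ[ℤ] DD ℤ n i p with hSp
    set SX := ∑ i : Fin n, (X i : MvPolynomial (Fin n) ℤ) ⊗ₜ[ℤ] DD ℤ n i (X j) with hSX
    have key : ∑ i : Fin n, (X i : MvPolynomial (Fin n) ℤ) ⊗ₜ[ℤ] DD ℤ n i (p * X j)
        = (1 ⊗ₜ[ℤ] p) * SX + (1 ⊗ₜ[ℤ] (X j : MvPolynomial (Fin n) ℤ)) * Sp := by
      rw [hSp, hSX, Finset.mul_sum, Finset.mul_sum, ← Finset.sum_add_distrib]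
      refine Finset.sum_congr rfl fun i _ => ?_
      rw [DD_mul, TensorProduct.tmul_add, Algebra.TensorProduct.tmul_mul_tmul,
        Algebra.TensorProduct.tmul_mul_tmul]
      simp
    have expand : phi n (p * X j) - 1 ⊗ₜ[ℤ] (p * X j) -
        ∑ i : Fin n, (X i : MvPolynomial (Fin n) ℤ) ⊗ₜ[ℤ] DD ℤ n i (p * X j)
        = Sp * SX + (phi n p - 1 ⊗ₜ[ℤ] p - Sp) * phi n (X j) := by
      rw [key, map_mul,
        show (1 : MvPolynomial (Fin n) ℤ) ⊗ₜ[ℤ] (p * X j)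
          = (1 ⊗ₜ[ℤ] p) * (1 ⊗ₜ[ℤ] (X j : MvPolynomial (Fin n) ℤ)) by
            rw [Algebra.TensorProduct.tmul_mul_tmul, one_mul]]
      rw [phi_X, ← hSX]
      ring
    rw [expand]
    have h1 : Sp * SX ∈ I2T n := by
      rw [hSp, hSX, Finset.sum_mul_sum]
      refine Submodule.sum_mem _ fun i _ => Submodule.sum_mem _ fun k _ => ?_
      rw [Algebra.TensorProduct.tmul_mul_tmul]
      refine tmul_mem_I2T ?_
      rw [pow_two]
      exact Ideal.mul_mem_mul (Ideal.subset_span ⟨i, rfl⟩) (Ideal.subset_span ⟨k, rfl⟩)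
    have h2 : (phi n p - 1 ⊗ₜ[ℤ] p - Sp) * phi n (X j) ∈ I2T n := by
      rw [mul_comm]
      exact I2T_mul_mem _ hp
    exact (I2T n).add_mem h1 h2

end helpers

theorem stmt1 (n : ℕ) (hn : 1 ≤ n) (p : MvPolynomial (Fin n) ℤ) :
    (phi n p - 1 ⊗ₜ[ℤ] p - ∑ i : Fin n, (MvPolynomial.X i) ⊗ₜ[ℤ] (DD ℤ n i p)) ∈ I2T n ∧
    ∀ q : Fin n → MvPolynomial (Fin n) ℤ,
      (phi n p - 1 ⊗ₜ[ℤ] p - ∑ i : Fin n, (MvPolynomial.X i) ⊗ₜ[ℤ] (q i)) ∈ I2T n →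
        ∀ i : Fin n, q i = DD ℤ n i p := by
  refine ⟨existence n p, fun q hq i => ?_⟩
  have hd : (∑ k : Fin n, (X k : MvPolynomial (Fin n) ℤ) ⊗ₜ[ℤ] (DD ℤ n k p - q k)) ∈ I2T n := by
    have hsub := (I2T n).sub_mem hq (existence n p)
    have heq : (phi n p - 1 ⊗ₜ[ℤ] p - ∑ i : Fin n, (X i : MvPolynomial (Fin n) ℤ) ⊗ₜ[ℤ] q i)
        - (phi n p - 1 ⊗ₜ[ℤ] p - ∑ i : Fin n, (X i : MvPolynomial (Fin n) ℤ) ⊗ₜ[ℤ] DD ℤ n i p)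
        = ∑ k : Fin n, (X k : MvPolynomial (Fin n) ℤ) ⊗ₜ[ℤ] (DD ℤ n k p - q k) := by
      have : ∀ k : Fin n, (X k : MvPolynomial (Fin n) ℤ) ⊗ₜ[ℤ] (DD ℤ n k p - q k)
          = X k ⊗ₜ[ℤ] DD ℤ n k p - X k ⊗ₜ[ℤ] q k := fun k => TensorProduct.tmul_sub _ _ _
      rw [Finset.sum_congr rfl fun k _ => this k, Finset.sum_sub_distrib]
      abel
    rw [heq] at hsub
    exact hsub
  have h0 := Lmap_I2T i hd
  rw [Lmap_sum i (fun k => DD ℤ n k p - q k)] at h0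
  have := sub_eq_zero.mp h0
  exact this.symm
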